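/- arXiv:2201.12340 — 2 statements merged into one kernel-verified Lean document; each statement's English description precedes it below -/
import Mathlib

section
/- With the notation of the two-sided power iteration φⁿ⁺¹ = Ĉ φⁿ D̂ / ‖Ĉ φⁿ D̂‖, where Ĉ = VΛV⁻¹, D̂ = U⁻¹ΣU with strictly dominant product eigenvalue λ₁σ₁ > 0, and φ⁰ = VαU with α₁₁ > 0 (eigenvectors v₁, u₁ of unit Frobenius norm), the iterates satisfy lim_{n→∞} φⁿ = v₁ u₁ᵀ / ‖v₁ u₁ᵀ‖. -/
open Matrix Filter

/-- Frobenius norm of a real matrix. -/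
noncomputable def frobNorm {N M : ℕ} (A : Matrix (Fin N) (Fin M) ℝ) : ℝ :=
  Real.sqrt (∑ i, ∑ j, (A i j) ^ 2)

lemma frobNorm_pos {N M : ℕ} {A : Matrix (Fin N) (Fin M) ℝ} (h : A ≠ 0) :
    0 < frobNorm A := by
  obtain ⟨i, j, hij⟩ : ∃ i j, A i j ≠ 0 := by
    by_contra h'
    push_neg at h'
    exact h (Matrix.ext fun i j => h' i j)
  apply Real.sqrt_pos.2
  refine Finset.sum_pos' (fun i _ => Finset.sum_nonneg fun j _ => sq_nonneg _)
    ⟨i, Finset.mem_univ i, Finset.sum_pos' (fun j _ => sq_nonneg _)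
      ⟨j, Finset.mem_univ j, by positivity⟩⟩

lemma frobNorm_smul {N M : ℕ} (c : ℝ) (A : Matrix (Fin N) (Fin M) ℝ) :
    frobNorm (c • A) = |c| * frobNorm A := by
  unfold frobNorm
  simp only [Matrix.smul_apply, smul_eq_mul, mul_pow, ← Finset.mul_sum]
  rw [Real.sqrt_mul (sq_nonneg c), Real.sqrt_sq_eq_abs]

lemma continuous_frobNorm {N M : ℕ} :
    Continuous (frobNorm (N := N) (M := M)) := by
  apply Real.continuous_sqrt.comp
  refine continuous_finset_sum _ fun i _ => continuous_finset_sum _ fun j _ => ?_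
  exact (continuous_id.matrix_elem i j).pow 2

lemma normalize_smul {N M : ℕ} (c : ℝ) (hc : 0 < c) (X : Matrix (Fin N) (Fin M) ℝ) :
    (frobNorm (c⁻¹ • X))⁻¹ • (c⁻¹ • X) = (frobNorm X)⁻¹ • X := by
  rw [frobNorm_smul, abs_inv, abs_of_pos hc, smul_smul]
  congr 1
  rw [_root_.mul_inv_rev, inv_inv, mul_assoc, mul_inv_cancel₀ hc.ne', mul_one]

/-- the two-sided power iteration converges to the normalized
rank-one matrix `v₁u₁ᵀ/‖v₁u₁ᵀ‖` built from the dominant eigenvectors. -/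
theorem stmt2 {N M : ℕ} [NeZero N] [NeZero M]
    (V : Matrix (Fin N) (Fin N) ℝ) (U : Matrix (Fin M) (Fin M) ℝ)
    (hV : IsUnit V.det) (hU : IsUnit U.det)
    (lam : Fin N → ℝ) (sig : Fin M → ℝ)
    (Chat : Matrix (Fin N) (Fin N) ℝ) (Dhat : Matrix (Fin M) (Fin M) ℝ)
    (hChat : Chat = V * Matrix.diagonal lam * V⁻¹)
    (hDhat : Dhat = U⁻¹ * Matrix.diagonal sig * U)
    (hpos : 0 < lam 0 * sig 0)
    (hdom : ∀ i j, (i, j) ≠ ((0 : Fin N), (0 : Fin M)) →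
      |lam i * sig j| < lam 0 * sig 0)
    (hv1 : Real.sqrt (∑ i, (V i 0) ^ 2) = 1)
    (hu1 : Real.sqrt (∑ j, (U 0 j) ^ 2) = 1)
    (α : Matrix (Fin N) (Fin M) ℝ) (hα : 0 < α 0 0)
    (φ : ℕ → Matrix (Fin N) (Fin M) ℝ)
    (hφ0 : φ 0 = V * α * U)
    (hnz : ∀ n, Chat * φ n * Dhat ≠ 0)
    (hiter : ∀ n, φ (n + 1) =
      (frobNorm (Chat * φ n * Dhat))⁻¹ • (Chat * φ n * Dhat)) :
    Tendsto φ atTop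
      (nhds ((frobNorm (Matrix.of fun i j => V i 0 * U 0 j))⁻¹ •
        (Matrix.of fun i j => V i 0 * U 0 j))) := by
  set k : ℝ := lam 0 * sig 0 with hk
  set W : Matrix (Fin N) (Fin M) ℝ := Matrix.of fun i j => V i 0 * U 0 j with hWdef
  -- the unnormalized iterates
  set Mn : ℕ → Matrix (Fin N) (Fin M) ℝ :=
    fun n => Matrix.of fun i j => (lam i * sig j) ^ n * α i j with hMn
  set A : ℕ → Matrix (Fin N) (Fin M) ℝ := fun n => V * Mn n * U with hA
  have hVinv : V⁻¹ * V = 1 := Matrix.nonsing_inv_mul V hV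
  have hUinv : U * U⁻¹ = 1 := Matrix.mul_nonsing_inv U hU
  have hChatV : Chat * V = V * Matrix.diagonal lam := by
    rw [hChat, mul_assoc, hVinv, mul_one]
  have hUDhat : U * Dhat = Matrix.diagonal sig * U := by
    rw [hDhat, ← mul_assoc, ← mul_assoc, hUinv, one_mul]
  have key : ∀ n, Chat * A n * Dhat = A (n + 1) := by
    intro n
    have : Matrix.diagonal lam * Mn n * Matrix.diagonal sig = Mn (n + 1) := by
      ext i j
      simp only [hMn, Matrix.diagonal_mul, Matrix.mul_diagonal, Matrix.of_apply]
      ring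
    calc Chat * A n * Dhat = (Chat * V) * Mn n * (U * Dhat) := by
          simp only [hA, Matrix.mul_assoc]
      _ = V * (Matrix.diagonal lam * Mn n * Matrix.diagonal sig) * U := by
          rw [hChatV, hUDhat]; simp only [Matrix.mul_assoc]
      _ = A (n + 1) := by rw [this]
  have hMn0 : Mn 0 = α := by
    ext i j
    simp [hMn]
  have hA0 : A 0 = φ 0 := by
    rw [hφ0]
    show V * Mn 0 * U = V * α * U
    rw [hMn0]
  -- main inductive claim
  have main : ∀ n, A (n + 1) ≠ 0 ∧ φ (n + 1) = (frobNorm (A (n + 1)))⁻¹ • A (n + 1) := by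
    intro n
    induction n with
    | zero =>
      have h1 : Chat * φ 0 * Dhat = A 1 := by rw [← hA0, key]
      refine ⟨h1 ▸ hnz 0, ?_⟩
      rw [hiter 0, h1]
    | succ m ih =>
      obtain ⟨hAne, hφeq⟩ := ih
      have hc : 0 < frobNorm (A (m + 1)) := frobNorm_pos hAne
      have h1 : Chat * φ (m + 1) * Dhat = (frobNorm (A (m + 1)))⁻¹ • A (m + 2) := by
        rw [hφeq, Matrix.mul_smul, Matrix.smul_mul, key]
      have hAne2 : A (m + 2) ≠ 0 := by
        intro h
        apply hnz (m + 1)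
        rw [h1, h, smul_zero]
      refine ⟨hAne2, ?_⟩
      rw [hiter (m + 1), h1, normalize_smul _ hc]
  -- entrywise convergence of the rescaled iterates
  have hkne : k ≠ 0 := hpos.ne'
  set Mlim : Matrix (Fin N) (Fin M) ℝ :=
    Matrix.of fun i j => if i = 0 ∧ j = 0 then α 0 0 else 0 with hMlim
  have hMtend : Tendsto (fun n => (k ^ n)⁻¹ • Mn n) atTop (nhds Mlim) := by
    refine tendsto_pi_nhds.mpr ?_
    intro i
    rw [tendsto_pi_nhds]
    intro j
    have hentry : ∀ n, ((k ^ n)⁻¹ • Mn n) i j = ((lam i * sig j) / k) ^ n * α i j := by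
      intro n
      simp only [Matrix.smul_apply, hMn, Matrix.of_apply, smul_eq_mul, div_pow]
      field_simp
    simp only [hentry]
    by_cases hij : i = 0 ∧ j = 0
    · obtain ⟨hi, hj⟩ := hij
      subst hi; subst hj
      have : ∀ n, ((lam 0 * sig 0) / k) ^ n * α 0 0 = α 0 0 := by
        intro n
        rw [hk, div_self hkne, one_pow, one_mul]
      simp only [this]
      have : Mlim 0 0 = α 0 0 := by simp [hMlim]
      rw [this]
      exact tendsto_const_nhds
    · have hne : (i, j) ≠ ((0 : Fin N), (0 : Fin M)) := by
        intro h
        exact hij ⟨congrArg Prod.fst h, congrArg Prod.snd h⟩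
      have hr : |(lam i * sig j) / k| < 1 := by
        rw [abs_div, abs_of_pos hpos, div_lt_one hpos]
        exact hdom i j hne
      have h0 : Mlim i j = 0 := by simp [hMlim, hij]
      rw [h0]
      have := (tendsto_pow_atTop_nhds_zero_of_abs_lt_one hr).mul_const (α i j)
      simpa using this
  -- identify the limit
  have hWlim : V * Mlim * U = α 0 0 • W := by
    have h1 : ∀ i q, (V * Mlim) i q = if q = 0 then V i 0 * α 0 0 else 0 := by
      intro i q
      rw [Matrix.mul_apply]
      by_cases hq : q = 0
      · subst hq
        rw [Finset.sum_eq_single 0]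
        · simp [hMlim]
        · intro p _ hp
          simp [hMlim, hp]
        · simp
      · simp [hMlim, hq]
    ext i j
    rw [Matrix.mul_apply]
    simp only [h1, ite_mul, zero_mul]
    rw [Finset.sum_ite_eq']
    simp [hWdef]
    ring
  have hBtend : Tendsto (fun n => (k ^ n)⁻¹ • A n) atTop (nhds (α 0 0 • W)) := by
    have hcont : Continuous fun X : Matrix (Fin N) (Fin M) ℝ => V * X * U :=
      (continuous_const.matrix_mul continuous_id).matrix_mul continuous_const
    have := (hcont.tendsto Mlim).comp hMtend
    rw [hWlim] at this
    convert this using 1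
    funext n
    simp only [hA, Function.comp]
    rw [Matrix.mul_smul, Matrix.smul_mul]
  -- W ≠ 0
  have hWne : W ≠ 0 := by
    have hv : ∑ i, (V i 0) ^ 2 = 1 := by
      have := congrArg (· ^ 2) hv1
      simpa [Real.sq_sqrt (Finset.sum_nonneg fun i _ => sq_nonneg (V i 0))] using this
    have hu : ∑ j, (U 0 j) ^ 2 = 1 := by
      have := congrArg (· ^ 2) hu1
      simpa [Real.sq_sqrt (Finset.sum_nonneg fun j _ => sq_nonneg (U 0 j))] using this
    obtain ⟨i, hi⟩ : ∃ i, V i 0 ≠ 0 := by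
      by_contra h
      push_neg at h
      simp [h] at hv
    obtain ⟨j, hj⟩ : ∃ j, U 0 j ≠ 0 := by
      by_contra h
      push_neg at h
      simp [h] at hu
    intro h
    have : W i j = 0 := by rw [h]; rfl
    simp only [hWdef, Matrix.of_apply] at this
    exact (mul_ne_zero hi hj) this
  have hLne : α 0 0 • W ≠ 0 := smul_ne_zero hα.ne' hWne
  have hLpos : 0 < frobNorm (α 0 0 • W) := frobNorm_pos hLne
  -- final limit identification
  have hlimeq : (frobNorm (α 0 0 • W))⁻¹ • (α 0 0 • W) = (frobNorm W)⁻¹ • W := by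
    rw [frobNorm_smul, abs_of_pos hα, smul_smul, _root_.mul_inv_rev, mul_assoc,
      inv_mul_cancel₀ hα.ne', mul_one]
  -- put everything together
  have hφn : ∀ n, φ (n + 1) =
      (frobNorm ((k ^ (n + 1))⁻¹ • A (n + 1)))⁻¹ • ((k ^ (n + 1))⁻¹ • A (n + 1)) := by
    intro n
    rw [normalize_smul _ (pow_pos hpos (n + 1)), (main n).2]
  rw [← tendsto_add_atTop_iff_nat 1]
  have h1 : Tendsto (fun n => (k ^ (n + 1))⁻¹ • A (n + 1)) atTop (nhds (α 0 0 • W)) :=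
    hBtend.comp (tendsto_add_atTop_nat 1)
  have h2 : Tendsto (fun n => frobNorm ((k ^ (n + 1))⁻¹ • A (n + 1))) atTop
      (nhds (frobNorm (α 0 0 • W))) :=
    (continuous_frobNorm.tendsto _).comp h1
  have h3 := (h2.inv₀ hLpos.ne').smul h1
  rw [hlimeq] at h3
  have : (fun n => φ (n + 1)) =
      fun n => (frobNorm ((k ^ (n + 1))⁻¹ • A (n + 1)))⁻¹ • ((k ^ (n + 1))⁻¹ • A (n + 1)) := by
    funext n; exact hφn n
  rw [this]
  exact h3
end

section
/- Let γ_n := ‖V Λ_cⁿ α‖ where V ∈ ℝ^{N×N}, Λ_c = diag(1, λ₂/λ₁, …, λ_N/λ₁) with |λⱼ/λ₁| ≤ |λ₂/λ₁| < 1 for j ≥ 2, and α ∈ ℝ^N with α₁ > 0 and the first column of V equal to a unit vector v₁. Then the normalized vectors xₙ := V Λ_cⁿ α / γ_n satisfy ‖xₙ − v₁‖ ≤ C |λ₂/λ₁|ⁿ for some constant C independent of n (for n large enough that γ_n > 0). -/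
open Matrix

/-- Euclidean norm on `Fin N → ℝ`. -/
noncomputable def eucNorm {N : ℕ} (x : Fin N → ℝ) : ℝ :=
  Real.sqrt (∑ i, (x i) ^ 2)

lemma eucNorm_eq {N : ℕ} (x : Fin N → ℝ) :
    eucNorm x = ‖(WithLp.equiv 2 (Fin N → ℝ)).symm x‖ := by
  rw [EuclideanSpace.norm_eq]
  simp [eucNorm, sq_abs]

/-- the normalized vectors `xₙ = V Λ_cⁿ α / ‖V Λ_cⁿ α‖` converge to the
first column `v₁` of `V` at rate `|λ₂/λ₁|ⁿ`. -/
theorem stmt4 {N : ℕ} [NeZero N]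
    (V : Matrix (Fin N) (Fin N) ℝ)
    (d : Fin N → ℝ) (r : ℝ)
    (hd0 : d 0 = 1)
    (hdr : ∀ j : Fin N, j ≠ 0 → |d j| ≤ r) (hr1 : r < 1)
    (α : Fin N → ℝ) (hα : 0 < α 0)
    (hv1 : eucNorm (fun i => V i 0) = 1) :
    ∃ C : ℝ, ∀ n : ℕ,
      0 < eucNorm (V.mulVec fun i => d i ^ n * α i) →
      eucNorm
          ((eucNorm (V.mulVec fun i => d i ^ n * α i))⁻¹ •
              (V.mulVec fun i => d i ^ n * α i) -
            fun i => V i 0) ≤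
        C * r ^ n := by
  classical
  set e : (Fin N → ℝ) → EuclideanSpace ℝ (Fin N) := ⇑(WithLp.equiv 2 (Fin N → ℝ)).symm with he
  set v₁ : Fin N → ℝ := fun i => V i 0 with hv₁
  have hnv₁ : ‖e v₁‖ = 1 := by rw [← eucNorm_eq]; exact hv1
  -- `α 0 • v₁` is the matrix applied to `Pi.single 0 (α 0)`
  have hsingle : V.mulVec (Pi.single 0 (α 0)) = α 0 • v₁ := by
    funext i
    simp [Matrix.mulVec_single, hv₁, mul_comm]
  by_cases hr0 : 0 ≤ r
  · -- main case
    set T : EuclideanSpace ℝ (Fin N) →L[ℝ] EuclideanSpace ℝ (Fin N) :=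
      LinearMap.toContinuousLinearMap (Matrix.toEuclideanLin V) with hT
    set K : ℝ := ‖T‖ * eucNorm α + 1 with hKdef
    have hK : 0 < K := by
      have h1 : 0 ≤ ‖T‖ * eucNorm α := by
        apply mul_nonneg (norm_nonneg _)
        exact Real.sqrt_nonneg _
      linarith
    refine ⟨4 * K / α 0, fun n hγpos => ?_⟩
    set y : Fin N → ℝ := V.mulVec (fun i => d i ^ n * α i) with hy
    set γ : ℝ := eucNorm y with hγdef
    have hγe : γ = ‖e y‖ := eucNorm_eq y
    have hrn : (0:ℝ) ≤ r ^ n := pow_nonneg hr0 n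
    set z : Fin N → ℝ := fun i => if i = 0 then 0 else d i ^ n * α i with hz
    have hsum : (fun i => d i ^ n * α i) = z + Pi.single 0 (α 0) := by
      funext i
      by_cases h : i = 0
      · subst h; simp [hz, hd0]
      · simp [hz, h, Pi.single_eq_of_ne h]
    have hysplit : y = V.mulVec z + α 0 • v₁ := by
      rw [hy, hsum, Matrix.mulVec_add, hsingle]
    have hez : eucNorm z ≤ r ^ n * eucNorm α := by
      have h1 : ∀ i, (z i) ^ 2 ≤ (r ^ n) ^ 2 * (α i) ^ 2 := by
        intro i
        by_cases h : i = 0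
        · subst h
          have hz0 : z 0 = (0:ℝ) := by simp [hz]
          rw [hz0]
          simpa using mul_nonneg (sq_nonneg (r ^ n)) (sq_nonneg (α 0))
        · simp only [hz, if_neg h]
          have hd2 : d i ^ 2 ≤ r ^ 2 :=
            sq_le_sq' (abs_le.mp (hdr i h)).1 (abs_le.mp (hdr i h)).2
          calc (d i ^ n * α i) ^ 2 = (d i ^ 2) ^ n * (α i) ^ 2 := by ring
            _ ≤ (r ^ 2) ^ n * (α i) ^ 2 := by
                gcongr <;> first | exact sq_nonneg _ | skip
            _ = (r ^ n) ^ 2 * (α i) ^ 2 := by ring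
      have h2 : ∑ i, (z i) ^ 2 ≤ (r ^ n) ^ 2 * ∑ i, (α i) ^ 2 := by
        rw [Finset.mul_sum]
        exact Finset.sum_le_sum fun i _ => h1 i
      calc eucNorm z ≤ Real.sqrt ((r ^ n) ^ 2 * ∑ i, (α i) ^ 2) :=
            Real.sqrt_le_sqrt h2
        _ = r ^ n * eucNorm α := by
            rw [Real.sqrt_mul (sq_nonneg _), Real.sqrt_sq hrn]; rfl
    have key : ‖e y - α 0 • e v₁‖ ≤ K * r ^ n := by
      have h1 : e y - α 0 • e v₁ = T (e z) := by
        rw [hysplit]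
        have : e (V.mulVec z + α 0 • v₁) = e (V.mulVec z) + α 0 • e v₁ := by
          simp [he, WithLp.equiv_symm_apply, WithLp.toLp_add, WithLp.toLp_smul]
        rw [this, add_sub_cancel_right]
        rfl
      rw [h1]
      calc ‖T (e z)‖ ≤ ‖T‖ * ‖e z‖ := T.le_opNorm _
        _ ≤ ‖T‖ * (r ^ n * eucNorm α) := by
            rw [← eucNorm_eq]
            exact mul_le_mul_of_nonneg_left hez (norm_nonneg _)
        _ = ‖T‖ * eucNorm α * r ^ n := by ring
        _ ≤ K * r ^ n := by
            apply mul_le_mul_of_nonneg_right _ hrn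
            linarith
    have hγα : |γ - α 0| ≤ K * r ^ n := by
      have h1 : ‖α 0 • e v₁‖ = α 0 := by
        rw [norm_smul, hnv₁, Real.norm_eq_abs, abs_of_pos hα, mul_one]
      calc |γ - α 0| = |‖e y‖ - ‖α 0 • e v₁‖| := by rw [hγe, h1]
        _ ≤ ‖e y - α 0 • e v₁‖ := abs_norm_sub_norm_le _ _
        _ ≤ K * r ^ n := key
    have hgoal_eq : eucNorm (γ⁻¹ • y - v₁) = ‖γ⁻¹ • e y - e v₁‖ := by
      rw [eucNorm_eq]
      congr 1
    rw [hgoal_eq]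
    clear_value T K y γ z e v₁
    by_cases hcase : K * r ^ n ≤ α 0 / 2
    · have hγlb : α 0 / 2 ≤ γ := by
        obtain ⟨h5, h6⟩ := abs_le.mp hγα
        linarith
      have hγne : γ ≠ 0 := ne_of_gt hγpos
      have hsplit2 : γ⁻¹ • e y - e v₁ = γ⁻¹ • (e y - γ • e v₁) := by
        rw [smul_sub, smul_smul, inv_mul_cancel₀ hγne, one_smul]
      have hbound : ‖e y - γ • e v₁‖ ≤ 2 * (K * r ^ n) := by
        calc ‖e y - γ • e v₁‖
            = ‖(e y - α 0 • e v₁) + (α 0 - γ) • e v₁‖ := by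
              congr 1
              rw [sub_smul]
              abel
          _ ≤ ‖e y - α 0 • e v₁‖ + ‖(α 0 - γ) • e v₁‖ := norm_add_le _ _
          _ = ‖e y - α 0 • e v₁‖ + |α 0 - γ| := by
              rw [norm_smul, hnv₁, mul_one, Real.norm_eq_abs]
          _ ≤ K * r ^ n + K * r ^ n := by
              have := hγα
              rw [abs_sub_comm] at this
              linarith [key]
          _ = 2 * (K * r ^ n) := by ring
      rw [hsplit2, norm_smul, Real.norm_eq_abs, abs_of_pos (inv_pos.mpr hγpos)]
      calc γ⁻¹ * ‖e y - γ • e v₁‖ ≤ γ⁻¹ * (2 * (K * r ^ n)) := by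
            exact mul_le_mul_of_nonneg_left hbound (le_of_lt (inv_pos.mpr hγpos))
        _ ≤ (α 0 / 2)⁻¹ * (2 * (K * r ^ n)) := by
            have h7 : γ⁻¹ ≤ (α 0 / 2)⁻¹ := by
              apply inv_anti₀ (by positivity) hγlb
            exact mul_le_mul_of_nonneg_right h7 (by positivity)
        _ = 4 * K / α 0 * r ^ n := by
            field_simp
            ring
    · push_neg at hcase
      have h2 : ‖γ⁻¹ • e y - e v₁‖ ≤ 2 := by
        calc ‖γ⁻¹ • e y - e v₁‖ ≤ ‖γ⁻¹ • e y‖ + ‖e v₁‖ := norm_sub_le _ _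
          _ = γ⁻¹ * γ + 1 := by
              rw [norm_smul, Real.norm_eq_abs, abs_of_pos (inv_pos.mpr hγpos),
                hnv₁, ← hγe]
          _ = 2 := by rw [inv_mul_cancel₀ (ne_of_gt hγpos)]; norm_num
      have h3 : (2:ℝ) ≤ 4 * K / α 0 * r ^ n := by
        rw [div_mul_eq_mul_div, le_div_iff₀ hα]
        nlinarith
      linarith
  · -- r < 0 : then N = 1 essentially, and the vectors are constant
    push_neg at hr0
    have hall : ∀ j : Fin N, j = 0 := by
      intro j
      by_contra h
      exact absurd (hdr j h) (not_le.mpr (lt_of_lt_of_le hr0 (abs_nonneg _)))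
    refine ⟨0, fun n hγpos => ?_⟩
    have hyconst : (V.mulVec fun i => d i ^ n * α i) = α 0 • v₁ := by
      have : (fun i => d i ^ n * α i) = Pi.single 0 (α 0) := by
        funext i
        rw [hall i]
        simp [hd0]
      rw [this, hsingle]
    rw [hyconst] at hγpos ⊢
    have hγval : eucNorm (α 0 • v₁) = α 0 := by
      rw [eucNorm_eq, WithLp.equiv_symm_apply, WithLp.toLp_smul, ← WithLp.equiv_symm_apply, norm_smul, hnv₁, Real.norm_eq_abs,
        abs_of_pos hα, mul_one]
    rw [hγval]
    have : (α 0)⁻¹ • (α 0 • v₁) - v₁ = 0 := by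
      rw [smul_smul, inv_mul_cancel₀ (ne_of_gt hα), one_smul, sub_self]
    rw [this]
    simp [eucNorm]
end
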